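/- Let (Ω, ℙ) be a probability space, let k ≥ 1 be a natural number, let p > 1 be real and set q = p/(p − 1). Let (Y_i)_{i ≥ 1} be nonnegative measurable functions on Ω with E[Y_i^{kp}] ≤ M < ∞ for all i, and let τ : Ω → ℕ be measurable with ℙ(τ ≥ n) ≤ C·e^{−α n} for all n ∈ ℕ, for some constants C, α > 0. Then for all indices i₁ ≤ i₂ ≤ ⋯ ≤ i_k one has ∫_{{τ ≥ i_k}} Y_{i₁}·Y_{i₂}·⋯·Y_{i_k} dℙ ≤ M^{1/p}·C^{1/q}·e^{−(α/(kq))·(i₁ + ⋯ + i_k)}. -/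

import Mathlib

open MeasureTheory Real

/-- Key estimate in Proposition 3.3: if `Y_i ≥ 0` have uniformly bounded `kp`-th moments and
`τ` has exponentially decaying tail, then for any nondecreasing indices `i₁ ≤ ⋯ ≤ i_k`,
`∫_{τ ≥ i_k} Y_{i₁} ⋯ Y_{i_k} ≤ M^{1/p} C^{1/q} e^{-(α/(kq))(i₁ + ⋯ + i_k)}`. -/
theorem integral_product_tail_bound {Ω : Type*} [MeasurableSpace Ω] (P : Measure Ω)
    [IsProbabilityMeasure P] (k : ℕ) (hk : 1 ≤ k) (p q : ℝ) (hp : 1 < p)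
    (hq : q = p / (p - 1))
    (Y : ℕ → Ω → ℝ) (hYmeas : ∀ i, Measurable (Y i)) (hYpos : ∀ i ω, 0 ≤ Y i ω)
    (M : ℝ) (hYint : ∀ i, Integrable (fun ω => Y i ω ^ ((k : ℝ) * p)) P)
    (hYmom : ∀ i, (∫ ω, Y i ω ^ ((k : ℝ) * p) ∂P) ≤ M)
    (τ : Ω → ℕ) (hτ : Measurable τ) (C α : ℝ) (hC : 0 < C) (hα : 0 < α)
    (htail : ∀ n : ℕ, (P {ω | n ≤ τ ω}).toReal ≤ C * Real.exp (-α * n))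
    (i : Fin k → ℕ) (hmono : Monotone i) :
    (∫ ω in {ω | i ⟨k - 1, by omega⟩ ≤ τ ω}, ∏ j, Y (i j) ω ∂P) ≤
      M ^ (1 / p) * C ^ (1 / q) * Real.exp (-(α / (k * q)) * ∑ j, (i j : ℝ)) := by
  have hp0 : 0 < p := lt_trans one_pos hp
  have hpq : p.HolderConjugate q := (Real.holderConjugate_iff_eq_conjExponent hp).2 hq
  have hq0 : 0 < q := hpq.symm.pos
  have hk0 : (0:ℝ) < k := by exact_mod_cast hk
  set jk : Fin k := ⟨k - 1, by omega⟩ with hjk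
  set f : Ω → ℝ := fun ω => ∏ j, Y (i j) ω with hf
  set A : Set Ω := {ω | i jk ≤ τ ω} with hA
  have hAmeas : MeasurableSet A := hτ measurableSet_Ici
  have hfmeas : Measurable f := Finset.measurable_prod _ fun j _ => hYmeas (i j)
  have hfnonneg : ∀ ω, 0 ≤ f ω := fun ω => Finset.prod_nonneg fun j _ => hYpos (i j) ω
  -- pointwise AM-GM
  have hptwise : ∀ ω, f ω ^ p ≤ (k:ℝ)⁻¹ * ∑ j, Y (i j) ω ^ ((k:ℝ) * p) := by
    intro ω
    have h1 : f ω ^ p = ∏ j, (Y (i j) ω ^ ((k:ℝ) * p)) ^ ((k:ℝ)⁻¹) := by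
      rw [hf, ← Real.finset_prod_rpow _ _ (fun j _ => hYpos (i j) ω) p]
      refine Finset.prod_congr rfl fun j _ => ?_
      rw [← Real.rpow_mul (hYpos (i j) ω)]
      congr 1
      field_simp
    rw [h1]
    calc ∏ j, (Y (i j) ω ^ ((k:ℝ) * p)) ^ ((k:ℝ)⁻¹)
        ≤ ∑ j, (k:ℝ)⁻¹ * Y (i j) ω ^ ((k:ℝ) * p) := by
          refine Real.geom_mean_le_arith_mean_weighted _ _ _
            (fun j _ => by positivity) ?_ (fun j _ => Real.rpow_nonneg (hYpos (i j) ω) _)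
          simp [Finset.card_univ]
          field_simp
      _ = (k:ℝ)⁻¹ * ∑ j, Y (i j) ω ^ ((k:ℝ) * p) := by rw [Finset.mul_sum]
  have hbound_int : Integrable (fun ω => (k:ℝ)⁻¹ * ∑ j, Y (i j) ω ^ ((k:ℝ) * p)) P :=
    (integrable_finset_sum _ fun j _ => hYint (i j)).const_mul _
  have hfp_meas : Measurable fun ω => f ω ^ p := by fun_prop
  have hfp_int : Integrable (fun ω => f ω ^ p) P := by
    refine hbound_int.mono' hfp_meas.aestronglyMeasurable (Filter.Eventually.of_forall fun ω => ?_)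
    rw [Real.norm_of_nonneg (Real.rpow_nonneg (hfnonneg ω) p)]
    exact hptwise ω
  have hM0 : 0 ≤ M := le_trans (integral_nonneg fun ω => Real.rpow_nonneg (hYpos 0 ω) _) (hYmom 0)
  have hfp_bound : ∫ ω, f ω ^ p ∂P ≤ M := by
    calc ∫ ω, f ω ^ p ∂P ≤ ∫ ω, (k:ℝ)⁻¹ * ∑ j, Y (i j) ω ^ ((k:ℝ) * p) ∂P :=
          integral_mono hfp_int hbound_int hptwise
      _ = (k:ℝ)⁻¹ * ∑ j, ∫ ω, Y (i j) ω ^ ((k:ℝ) * p) ∂P := by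
          rw [integral_const_mul, integral_finset_sum _ fun j _ => hYint (i j)]
      _ ≤ (k:ℝ)⁻¹ * ∑ _j : Fin k, M :=
          mul_le_mul_of_nonneg_left (Finset.sum_le_sum fun j _ => hYmom (i j))
            (inv_nonneg.mpr hk0.le)
      _ = M := by
          rw [Finset.sum_const, Finset.card_univ, Fintype.card_fin, nsmul_eq_mul]
          field_simp
  -- Memℒp statements
  have hfLp : MemLp f (ENNReal.ofReal p) P := by
    have hne : ENNReal.ofReal p ≠ 0 := by simp [ENNReal.ofReal_eq_zero, not_le, hp0]
    have hnt : ENNReal.ofReal p ≠ ⊤ := ENNReal.ofReal_ne_top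
    refine (memLp_norm_rpow_iff hfmeas.aestronglyMeasurable hne hnt).1 ?_
    rw [ENNReal.div_self hne hnt, memLp_one_iff_integrable]
    refine hfp_int.congr (Filter.Eventually.of_forall fun ω => ?_)
    show f ω ^ p = ‖f ω‖ ^ (ENNReal.ofReal p).toReal
    rw [Real.norm_of_nonneg (hfnonneg ω), ENNReal.toReal_ofReal hp0.le]
  set g : Ω → ℝ := A.indicator fun _ => (1:ℝ) with hg
  have hgLq : MemLp g (ENNReal.ofReal q) P :=
    memLp_indicator_const _ hAmeas 1 (Or.inr (measure_ne_top P A))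
  have holder := integral_mul_le_Lp_mul_Lq_of_nonneg hpq
    (Filter.Eventually.of_forall hfnonneg)
    (Filter.Eventually.of_forall fun ω => Set.indicator_nonneg (fun _ _ => zero_le_one) ω)
    hfLp hgLq
  have hLHS : ∫ ω, f ω * g ω ∂P = ∫ ω in A, f ω ∂P := by
    rw [← integral_indicator hAmeas]
    refine integral_congr_ae (Filter.Eventually.of_forall fun ω => ?_)
    by_cases h : ω ∈ A <;> simp [hg, Set.indicator_apply, h]
  have hgq : ∫ ω, g ω ^ q ∂P = (P A).toReal := by
    have : ∀ ω, g ω ^ q = A.indicator (fun _ => (1:ℝ)) ω := by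
      intro ω
      by_cases h : ω ∈ A <;>
        simp [hg, Set.indicator_apply, h, Real.zero_rpow hq0.ne', Real.one_rpow]
    rw [integral_congr_ae (Filter.Eventually.of_forall this), integral_indicator_const _ hAmeas]
    simp [Measure.real]
  rw [hLHS, hgq] at holder
  refine le_trans holder ?_
  -- bound each factor
  have hsum_le : (∑ j, (i j : ℝ)) ≤ k * i jk := by
    have : ∀ j : Fin k, (i j : ℝ) ≤ i jk := by
      intro j
      have hjlt := j.isLt
      exact Nat.cast_le.mpr (hmono (show (j:ℕ) ≤ k - 1 by omega))
    calc (∑ j, (i j : ℝ)) ≤ ∑ _j : Fin k, (i jk : ℝ) := Finset.sum_le_sum fun j _ => this j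
      _ = k * i jk := by rw [Finset.sum_const, Finset.card_univ, Fintype.card_fin, nsmul_eq_mul]
  have hPA : (P A).toReal ≤ C * Real.exp (-α * ((∑ j, (i j : ℝ)) / k)) := by
    have hdiv : (∑ j, (i j : ℝ)) / k ≤ (i jk : ℝ) :=
      (div_le_iff₀ hk0).mpr (by linarith [hsum_le])
    refine le_trans (htail (i jk)) (mul_le_mul_of_nonneg_left (Real.exp_le_exp.mpr ?_) hC.le)
    rw [neg_mul, neg_mul, neg_le_neg_iff]
    exact mul_le_mul_of_nonneg_left hdiv hα.le
  have hfactor1 : (∫ ω, f ω ^ p ∂P) ^ (1/p) ≤ M ^ (1/p) :=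
    Real.rpow_le_rpow (integral_nonneg fun ω => Real.rpow_nonneg (hfnonneg ω) p)
      hfp_bound (by positivity)
  have hfactor2 : (P A).toReal ^ (1/q) ≤ C ^ (1/q) * Real.exp (-(α / (k * q)) * ∑ j, (i j : ℝ)) := by
    calc (P A).toReal ^ (1/q)
        ≤ (C * Real.exp (-α * ((∑ j, (i j : ℝ)) / k))) ^ (1/q) :=
          Real.rpow_le_rpow ENNReal.toReal_nonneg hPA (by positivity)
      _ = C ^ (1/q) * Real.exp (-(α / (k * q)) * ∑ j, (i j : ℝ)) := by
          rw [Real.mul_rpow hC.le (Real.exp_nonneg _), ← Real.exp_mul]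
          congr 1
          field_simp
          try ring
  calc (∫ ω, f ω ^ p ∂P) ^ (1/p) * (P A).toReal ^ (1/q)
      ≤ M ^ (1/p) * (C ^ (1/q) * Real.exp (-(α / (k * q)) * ∑ j, (i j : ℝ))) := by
        refine mul_le_mul hfactor1 hfactor2 (Real.rpow_nonneg ENNReal.toReal_nonneg _) ?_
        positivity
    _ = M ^ (1/p) * C ^ (1/q) * Real.exp (-(α / (k * q)) * ∑ j, (i j : ℝ)) := by ring
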